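/- Let H be a complex Hilbert space, A a positive operator on H, and ε ∈ [0,1). Suppose B_{H(A)} ∩ closure(R(A)) is bounded with respect to the Hilbert space norm ‖·‖, where R(A) is the range of A. Let T, S be A-bounded compact operators on H and suppose M_A^T = {γx : γ ∈ ℂ, |γ| = 1} for some fixed x ∈ H. Then T ⊥_{ε(A)} S if and only if ‖Tx‖_A = ‖T‖_A and |Re(e^{−iθ}⟨Tx, Sx⟩_A)| ≤ ε‖T‖_A‖S‖_A for each θ ∈ [0,π). -/

import Mathlib

noncomputable section

/-- The seminorm induced by a positive operator `A`: `‖x‖_A = √(re ⟪A x, x⟫)`. -/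
def anorm {𝕜 H : Type*} [RCLike 𝕜] [NormedAddCommGroup H] [InnerProductSpace 𝕜 H]
    (A : H →L[𝕜] H) (x : H) : ℝ :=
  Real.sqrt (RCLike.re (inner 𝕜 (A x) x : 𝕜))

/-- The semi-inner ℂ product induced by `A`: `⟨x, y⟩_A = ⟪A x, y⟫`. -/
def ainner {𝕜 H : Type*} [RCLike 𝕜] [NormedAddCommGroup H] [InnerProductSpace 𝕜 H]
    (A : H →L[𝕜] H) (x y : H) : 𝕜 :=
  (inner 𝕜 (A x) y : 𝕜)

/-- `T` is `A`-bounded. -/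
def IsABounded {𝕜 H : Type*} [RCLike 𝕜] [NormedAddCommGroup H] [InnerProductSpace 𝕜 H]
    (A T : H →L[𝕜] H) : Prop :=
  ∃ c > 0, ∀ x : H, anorm A (T x) ≤ c * anorm A x

/-- The `A`-norm of an operator `T`: `sup {‖Tx‖_A : ‖x‖_A = 1}`. -/
def opAnorm {𝕜 H : Type*} [RCLike 𝕜] [NormedAddCommGroup H] [InnerProductSpace 𝕜 H]
    (A T : H →L[𝕜] H) : ℝ :=
  sSup {r : ℝ | ∃ x : H, anorm A x = 1 ∧ r = anorm A (T x)}

/-- `(ε,A)`-approximate orthogonality in the sense of Chmieliński, for vectors. -/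
def VOrthEps {𝕜 H : Type*} [RCLike 𝕜] [NormedAddCommGroup H] [InnerProductSpace 𝕜 H]
    (A : H →L[𝕜] H) (ε : ℝ) (x y : H) : Prop :=
  ∀ l : 𝕜, anorm A x ^ 2 - 2 * ε * anorm A x * anorm A (l • y) ≤ anorm A (x + l • y) ^ 2

/-- `(ε,A)`-approximate orthogonality in the sense of Chmieliński, for operators. -/
def OpOrthEps {𝕜 H : Type*} [RCLike 𝕜] [NormedAddCommGroup H] [InnerProductSpace 𝕜 H]
    (A T S : H →L[𝕜] H) (ε : ℝ) : Prop :=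
  ∀ l : 𝕜, opAnorm A T ^ 2 - 2 * ε * opAnorm A T * opAnorm A (l • S) ≤ opAnorm A (T + l • S) ^ 2

end

set_option linter.unusedSectionVars false

section Aux

open ContinuousLinearMap
open scoped InnerProductSpace ComplexConjugate Topology

variable {H : Type*} [NormedAddCommGroup H] [InnerProductSpace ℂ H] [CompleteSpace H]
variable {A B : H →L[ℂ] H}

lemma exists_sqrt (hA : A.IsPositive) : ∃ B : H →L[ℂ] H, IsSelfAdjoint B ∧ B * B = A := by
  have h0 : (0 : H →L[ℂ] H) ≤ A := (ContinuousLinearMap.nonneg_iff_isPositive A).mpr hA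
  refine ⟨CFC.sqrt A, IsSelfAdjoint.of_nonneg (CFC.sqrt_nonneg (a := A)), ?_⟩
  simpa [sq] using CFC.sq_sqrt A h0

variable (hB : IsSelfAdjoint B) (hBA : B * B = A)

include hB hBA in
lemma anorm_eq (w : H) : anorm A w = ‖B w‖ := by
  have hsym := ContinuousLinearMap.isSelfAdjoint_iff_isSymmetric.mp hB
  have h1 : (inner ℂ (A w) w : ℂ) = inner ℂ (B w) (B w) := by
    rw [← hBA]
    exact hsym (B w) w
  rw [anorm, h1]
  rw [inner_self_eq_norm_sq (𝕜 := ℂ)]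
  exact Real.sqrt_sq (norm_nonneg _)

include hB hBA in
lemma ainner_eq (w y : H) : ainner A w y = (inner ℂ (B w) (B y) : ℂ) := by
  have hsym := ContinuousLinearMap.isSelfAdjoint_iff_isSymmetric.mp hB
  rw [ainner, ← hBA]
  exact hsym (B w) y

lemma anorm_nonneg (w : H) : 0 ≤ anorm A w := Real.sqrt_nonneg _

include hB hBA in
lemma anorm_add_le (w y : H) : anorm A (w + y) ≤ anorm A w + anorm A y := by
  rw [anorm_eq hB hBA, anorm_eq hB hBA, anorm_eq hB hBA, map_add]
  exact norm_add_le _ _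

include hB hBA in
lemma anorm_smul (c : ℂ) (w : H) : anorm A (c • w) = ‖c‖ * anorm A w := by
  rw [anorm_eq hB hBA, anorm_eq hB hBA, map_smul, norm_smul]

include hB hBA in
lemma ainner_le (w y : H) : ‖ainner A w y‖ ≤ anorm A w * anorm A y := by
  rw [ainner_eq hB hBA, anorm_eq hB hBA, anorm_eq hB hBA]
  exact norm_inner_le_norm _ _

include hB hBA in
lemma anorm_expand (u v : H) (c : ℂ) :
    anorm A (u + c • v) ^ 2
      = anorm A u ^ 2 + 2 * (c * ainner A u v).re + ‖c‖ ^ 2 * anorm A v ^ 2 := by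
  rw [anorm_eq hB hBA, anorm_eq hB hBA, anorm_eq hB hBA, ainner_eq hB hBA, map_add, map_smul]
  rw [@norm_add_sq ℂ _ _ _ _ (B u) (c • B v), inner_smul_right, norm_smul]
  have : (c * inner ℂ (B u) (B v)).re = RCLike.re (c * (inner ℂ (B u) (B v) : ℂ)) := rfl
  rw [mul_pow]
  ring_nf
  norm_num [Complex.normSq_eq_norm_sq]
  ring

variable {T S : H →L[ℂ] H}

lemma opAnorm_bddAbove (hT : IsABounded A T) :
    BddAbove {r : ℝ | ∃ z : H, anorm A z = 1 ∧ r = anorm A (T z)} := by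
  obtain ⟨c, -, hc⟩ := hT
  exact ⟨c, fun r ⟨z, hz, hr⟩ => by simpa [hr, hz] using hc z⟩

lemma le_opAnorm (hT : IsABounded A T) {z : H} (hz : anorm A z = 1) :
    anorm A (T z) ≤ opAnorm A T :=
  le_csSup (opAnorm_bddAbove hT) ⟨z, hz, rfl⟩

lemma opAnorm_nonneg (hT : IsABounded A T) {z : H} (hz : anorm A z = 1) :
    0 ≤ opAnorm A T :=
  le_trans (anorm_nonneg _) (le_opAnorm hT hz)

lemma opAnorm_le {z₀ : H} (hz₀ : anorm A z₀ = 1) {c : ℝ}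
    (hc : ∀ z : H, anorm A z = 1 → anorm A (T z) ≤ c) : opAnorm A T ≤ c :=
  csSup_le ⟨_, z₀, hz₀, rfl⟩ (fun r ⟨z, hz, hr⟩ => hr ▸ hc z hz)

include hB hBA in
lemma anorm_apply_le (hT : IsABounded A T) {z₀ : H} (hz₀ : anorm A z₀ = 1) (z : H) :
    anorm A (T z) ≤ opAnorm A T * anorm A z := by
  rcases eq_or_lt_of_le (anorm_nonneg (A := A) z) with h0 | h0
  · obtain ⟨c, -, hc⟩ := hT
    have := hc z
    rw [← h0] at this
    simpa [← h0] using this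
  · set a := anorm A z with ha
    have hz' : anorm A (((a : ℂ))⁻¹ • z) = 1 := by
      rw [anorm_smul hB hBA, norm_inv, Complex.norm_real, Real.norm_of_nonneg h0.le]
      field_simp
      exact ha.symm
    have hrez : T z = (a : ℂ) • T (((a : ℂ))⁻¹ • z) := by
      rw [← map_smul, smul_inv_smul₀ (by exact_mod_cast h0.ne')]
    rw [hrez, anorm_smul hB hBA, Complex.norm_real, Real.norm_of_nonneg h0.le]
    rw [mul_comm (opAnorm A T) a]
    exact mul_le_mul_of_nonneg_left (le_opAnorm hT hz') h0.le

include hB hBA in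
lemma isABounded_smul (hT : IsABounded A T) (l : ℂ) : IsABounded A (l • T) := by
  obtain ⟨c, hc0, hc⟩ := hT
  refine ⟨(‖l‖ + 1) * c, by positivity, fun z => ?_⟩
  rw [ContinuousLinearMap.smul_apply, anorm_smul hB hBA]
  calc ‖l‖ * anorm A (T z) ≤ (‖l‖ + 1) * (c * anorm A z) := by
        apply mul_le_mul (by linarith) (hc z) (anorm_nonneg _) (by positivity)
    _ = (‖l‖ + 1) * c * anorm A z := by ring

include hB hBA in
lemma isABounded_add (hT : IsABounded A T) (hS : IsABounded A S) :
    IsABounded A (T + S) := by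
  obtain ⟨c, hc0, hc⟩ := hT
  obtain ⟨d, hd0, hd⟩ := hS
  refine ⟨c + d, by positivity, fun z => ?_⟩
  calc anorm A ((T + S) z) ≤ anorm A (T z) + anorm A (S z) := by
        rw [ContinuousLinearMap.add_apply]; exact anorm_add_le hB hBA _ _
    _ ≤ c * anorm A z + d * anorm A z := add_le_add (hc z) (hd z)
    _ = (c + d) * anorm A z := by ring

include hB hBA in
lemma isABounded_add_smul (hT : IsABounded A T) (hS : IsABounded A S) (l : ℂ) :
    IsABounded A (T + l • S) :=
  isABounded_add hB hBA hT (isABounded_smul hB hBA hS l)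

include hB hBA in
lemma opAnorm_smul (hS : IsABounded A S) {z₀ : H} (hz₀ : anorm A z₀ = 1) (l : ℂ) :
    opAnorm A (l • S) = ‖l‖ * opAnorm A S := by
  rcases eq_or_ne l 0 with rfl | hl
  · simp only [norm_zero, zero_mul, zero_smul]
    apply le_antisymm
    · exact opAnorm_le hz₀ (fun z hz => by simp [anorm, inner_zero_left])
    · have : anorm A ((0 : H →L[ℂ] H) z₀) = 0 := by simp [anorm, inner_zero_left]
      exact this ▸ le_opAnorm ⟨1, one_pos, fun z => by simp [anorm, inner_zero_left, anorm_nonneg]⟩ hz₀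
  · apply le_antisymm
    · apply opAnorm_le hz₀ (fun z hz => ?_)
      rw [ContinuousLinearMap.smul_apply, anorm_smul hB hBA]
      exact mul_le_mul_of_nonneg_left (le_opAnorm hS hz) (norm_nonneg _)
    · rw [← le_div_iff₀' (by simpa using hl)]
      apply opAnorm_le hz₀ (fun z hz => ?_)
      rw [le_div_iff₀' (by simpa using hl)]
      calc ‖l‖ * anorm A (S z) = anorm A ((l • S) z) := by
            rw [ContinuousLinearMap.smul_apply, anorm_smul hB hBA]
        _ ≤ opAnorm A (l • S) := le_opAnorm (isABounded_smul hB hBA hS l) hz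

-- Projection onto the closure of the range kills nothing A-relevant.
lemma range_orth_ker (hA : A.IsPositive) {v : H}
    (hv : v ∈ ((LinearMap.range (A : H →ₗ[ℂ] H)).topologicalClosure)ᗮ) : A v = 0 := by
  have hsym := ContinuousLinearMap.isSelfAdjoint_iff_isSymmetric.mp hA.isSelfAdjoint
  have hmem : A (A v) ∈ (LinearMap.range (A : H →ₗ[ℂ] H)).topologicalClosure :=
    Submodule.le_topologicalClosure _ ⟨A v, rfl⟩
  have h0 : (inner ℂ (A (A v)) v : ℂ) = 0 := (Submodule.mem_orthogonal _ v).mp hv _ hmem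
  have h1 := hsym (A v) v
  simp only [ContinuousLinearMap.coe_coe] at h1
  have : (inner ℂ (A v) (A v) : ℂ) = 0 := by rw [← h1]; exact h0
  exact inner_self_eq_zero.mp this

include hB hBA in
lemma bzero_of_anorm_zero {v : H} (h : anorm A v = 0) : B v = 0 := by
  rw [anorm_eq hB hBA] at h
  simpa using h

include hB hBA in
lemma anorm_eq_zero_of {v : H} (hv : A v = 0) : B v = 0 := by
  have : ‖B v‖ = 0 := by
    rw [← anorm_eq hB hBA, anorm, hv]
    simp
  simpa using this

include hB hBA in
lemma exists_proj (hA : A.IsPositive) (hT : IsABounded A T) (z : H) :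
    ∃ z' : H, z' ∈ ((LinearMap.range (A : H →ₗ[ℂ] H)).topologicalClosure : Set H) ∧
      anorm A z' = anorm A z ∧ anorm A (T z') = anorm A (T z) := by
  set K := (LinearMap.range (A : H →ₗ[ℂ] H)).topologicalClosure
  haveI : CompleteSpace K := (LinearMap.range (A : H →ₗ[ℂ] H)).isClosed_topologicalClosure.completeSpace_coe
  set v := z - (K.orthogonalProjectionOnto z : H) with hvdef
  have hvK : v ∈ Kᗮ := Submodule.sub_starProjection_mem_orthogonal (K := K) z
  have hAv : A v = 0 := range_orth_ker hA hvK
  have hBv : B v = 0 := anorm_eq_zero_of hB hBA hAv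
  have hav : anorm A v = 0 := by rw [anorm_eq hB hBA, hBv, norm_zero]
  have hBTv : B (T v) = 0 := by
    apply bzero_of_anorm_zero hB hBA
    obtain ⟨c, hc0, hc⟩ := hT
    have := hc v
    rw [hav, mul_zero] at this
    exact le_antisymm this (anorm_nonneg _)
  have hz : B z = B ((K.orthogonalProjectionOnto z : H)) := by
    conv_lhs => rw [show z = (K.orthogonalProjectionOnto z : H) + v by rw [hvdef]; abel]
    rw [map_add, hBv, add_zero]
  have hz' : B (T z) = B (T ((K.orthogonalProjectionOnto z : H))) := by
    conv_lhs => rw [show z = (K.orthogonalProjectionOnto z : H) + v by rw [hvdef]; abel]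
    rw [map_add, map_add, hBTv, add_zero]
  refine ⟨K.orthogonalProjectionOnto z, (K.orthogonalProjectionOnto z).2, ?_, ?_⟩
  · rw [anorm_eq hB hBA, anorm_eq hB hBA, hz]
  · rw [anorm_eq hB hBA, anorm_eq hB hBA, hz']

include hB hBA in
lemma exists_near_max (hA : A.IsPositive) (hR : IsABounded A T) {z₀ : H} (hz₀ : anorm A z₀ = 1)
    {δ : ℝ} (hδ : 0 < δ) :
    ∃ z : H, z ∈ ((LinearMap.range (A : H →ₗ[ℂ] H)).topologicalClosure : Set H) ∧
      anorm A z = 1 ∧ opAnorm A T - δ < anorm A (T z) := by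
  have hne : {r : ℝ | ∃ z : H, anorm A z = 1 ∧ r = anorm A (T z)}.Nonempty := ⟨_, z₀, hz₀, rfl⟩
  obtain ⟨r, ⟨z1, hz1, rfl⟩, hlt⟩ :=
    exists_lt_of_lt_csSup hne (show opAnorm A T - δ < opAnorm A T by simp [hδ])
  obtain ⟨z', hz'K, hz'1, hz'T⟩ := exists_proj hB hBA hA hR z1
  exact ⟨z', hz'K, hz'1.trans hz1, by rw [hz'T]; exact hlt⟩

-- weak cluster point of a bounded sequence in a Hilbert space
lemma exists_weak_cluster (z : ℕ → H) {M : ℝ} (hz : ∀ n, ‖z n‖ ≤ M) :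
    ∃ w : H, ∀ y : H, MapClusterPt (inner ℂ w y : ℂ) Filter.atTop (fun n => (inner ℂ (z n) y : ℂ)) := by
  classical
  set f : ℕ → WeakDual ℂ H := fun n => (InnerProductSpace.toDual ℂ H (z n) : StrongDual ℂ H)
  have hfball : ∀ n, f n ∈ WeakDual.toStrongDual ⁻¹' Metric.closedBall 0 M := by
    intro n
    simp only [Set.mem_preimage, Metric.mem_closedBall, dist_zero_right]
    show ‖(InnerProductSpace.toDual ℂ H (z n) : StrongDual ℂ H)‖ ≤ M
    rw [(InnerProductSpace.toDual ℂ H).norm_map]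
    exact hz n
  have hcpt := WeakDual.isCompact_closedBall (𝕜 := ℂ) (E := H) 0 M
  have hle : Filter.map f Filter.atTop ≤ Filter.principal
      (WeakDual.toStrongDual ⁻¹' Metric.closedBall 0 M) :=
    Filter.tendsto_principal.mpr (Filter.Eventually.of_forall hfball)
  obtain ⟨g, -, hg⟩ := hcpt.exists_clusterPt hle
  set w := (InnerProductSpace.toDual ℂ H).symm (WeakDual.toStrongDual g) with hw
  refine ⟨w, fun y => ?_⟩
  have hcont : ContinuousAt (fun h : WeakDual ℂ H => h y) g := (WeakDual.eval_continuous y).continuousAt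
  have := (mapClusterPt_def.mpr hg).continuousAt_comp hcont
  have heq : ((fun h : WeakDual ℂ H => h y) ∘ f) = fun n => (inner ℂ (z n) y : ℂ) := by
    funext n
    exact InnerProductSpace.toDual_apply_apply
  rw [heq] at this
  have hwy : (inner ℂ w y : ℂ) = g y := by
    have h2 : InnerProductSpace.toDual ℂ H w = WeakDual.toStrongDual g :=
      (InnerProductSpace.toDual ℂ H).apply_symm_apply _
    rw [← InnerProductSpace.toDual_apply_apply (𝕜 := ℂ), h2]
    rfl
  rw [hwy]
  exact this

lemma compact_subseq (hTc : IsCompactOperator (⇑T)) (z : ℕ → H) {M : ℝ}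
    (hz : ∀ n, ‖z n‖ ≤ M) :
    ∃ u : H, ∃ φ : ℕ → ℕ, StrictMono φ ∧
      Filter.Tendsto (fun n => T (z (φ n))) Filter.atTop (𝓝 u) := by
  have hTc' : IsCompactOperator (⇑(T : H →ₗ[ℂ] H)) := hTc
  have hK := hTc'.isCompact_closure_image_closedBall (𝕜₁ := ℂ) M
  have hmem : ∀ n, T (z n) ∈ closure ((T : H →ₗ[ℂ] H) '' Metric.closedBall 0 M) := fun n =>
    subset_closure ⟨z n, by simpa [Metric.mem_closedBall, dist_zero_right] using hz n, rfl⟩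
  obtain ⟨u, -, φ, hφ, hconv⟩ := hK.tendsto_subseq hmem
  exact ⟨u, φ, hφ, hconv⟩

lemma cluster_eq {X : Type*} [TopologicalSpace X] [T2Space X] {u : ℕ → X} {a b : X}
    (h : MapClusterPt a Filter.atTop u) (h' : Filter.Tendsto u Filter.atTop (𝓝 b)) : a = b :=
  eq_of_nhds_neBot (h.clusterPt.mono h')

lemma theta_iff (w₀ : ℂ) (C : ℝ) :
    (∀ θ ∈ Set.Ico (0:ℝ) Real.pi,
      |(Complex.exp (-(θ:ℂ) * Complex.I) * w₀).re| ≤ C) ↔ ‖w₀‖ ≤ C := by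
  have key : ∀ θ : ℝ, Complex.exp (-(θ:ℂ) * Complex.I) * w₀
      = (‖w₀‖ : ℂ) * Complex.exp (((w₀.arg - θ : ℝ) : ℂ) * Complex.I) := by
    intro θ
    conv_lhs => rw [← Complex.norm_mul_exp_arg_mul_I w₀]
    rw [mul_comm, mul_assoc, ← Complex.exp_add]
    congr 2
    push_cast
    ring
  have keyre : ∀ θ : ℝ, (Complex.exp (-(θ:ℂ) * Complex.I) * w₀).re
      = ‖w₀‖ * Real.cos (w₀.arg - θ) := by
    intro θ
    rw [key θ, Complex.re_ofReal_mul, Complex.exp_ofReal_mul_I_re]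
  constructor
  · intro h
    rcases lt_or_ge w₀.arg 0 with ha | ha
    · have h1 := h (w₀.arg + Real.pi)
        ⟨by linarith [Complex.neg_pi_lt_arg w₀], by linarith⟩
      rw [keyre] at h1
      simpa [show w₀.arg - (w₀.arg + Real.pi) = -Real.pi by ring, Real.cos_pi,
        abs_of_nonneg (norm_nonneg w₀)] using h1
    · rcases lt_or_ge w₀.arg Real.pi with hb | hb
      · have h1 := h w₀.arg ⟨ha, hb⟩
        rw [keyre] at h1
        simpa [abs_of_nonneg (norm_nonneg w₀)] using h1
      · have hpi : w₀.arg = Real.pi := le_antisymm (Complex.arg_le_pi w₀) hb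
        have h1 := h 0 ⟨le_refl 0, Real.pi_pos⟩
        rw [keyre] at h1
        simpa [hpi, Real.cos_pi, abs_of_nonneg (norm_nonneg w₀)] using h1
  · intro h θ hθ
    rw [keyre]
    rw [abs_mul, abs_of_nonneg (norm_nonneg w₀)]
    calc ‖w₀‖ * |Real.cos (w₀.arg - θ)| ≤ ‖w₀‖ * 1 :=
          mul_le_mul_of_nonneg_left (Real.abs_cos_le_one _) (norm_nonneg w₀)
      _ = ‖w₀‖ := mul_one _
      _ ≤ C := h

lemma cluster_mem {X : Type*} [TopologicalSpace X] {u : ℕ → X} {a : X} {s : Set X}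
    (h : MapClusterPt a Filter.atTop u) (hs : IsClosed s) (hu : ∀ n, u n ∈ s) : a ∈ s :=
  isClosed_iff_clusterPt.mp hs a (h.clusterPt.mono (Filter.le_principal_iff.mpr
    (Filter.mem_map.mpr (Filter.Eventually.of_forall hu))))

end Aux

open scoped Topology

set_option maxHeartbeats 4000000 in
/-- if `M_A^T = {γx : |γ| = 1}` for a fixed `x`, then `T ⊥_{ε(A)} S` iff
`‖Tx‖_A = ‖T‖_A` and `|Re(e^{−iθ}⟨Tx, Sx⟩_A)| ≤ ε‖T‖_A‖S‖_A` for each `θ ∈ [0,π)`. -/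
theorem stmt_10 {H : Type*} [NormedAddCommGroup H] [InnerProductSpace ℂ H] [CompleteSpace H]
    (A : H →L[ℂ] H) (hA : A.IsPositive) (ε : ℝ) (hε0 : 0 ≤ ε) (hε1 : ε < 1)
    (hball : Bornology.IsBounded ({x : H | anorm A x ≤ 1} ∩
      ((LinearMap.range (A : H →ₗ[ℂ] H)).topologicalClosure : Set H)))
    (T S : H →L[ℂ] H) (hT : IsABounded A T) (hS : IsABounded A S)
    (hTc : IsCompactOperator (⇑T)) (hSc : IsCompactOperator (⇑S))
    (x : H)
    (hM : {z : H | anorm A z = 1 ∧ anorm A (T z) = opAnorm A T} =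
      {z : H | ∃ γ : ℂ, ‖γ‖ = 1 ∧ z = γ • x}) :
    OpOrthEps A T S ε ↔
      anorm A (T x) = opAnorm A T ∧
        ∀ θ ∈ Set.Ico (0 : ℝ) Real.pi,
          |(Complex.exp (-(θ : ℂ) * Complex.I) * ainner A (T x) (S x)).re| ≤
            ε * opAnorm A T * opAnorm A S := by
  obtain ⟨B, hB, hBA⟩ := exists_sqrt hA
  have hxM : anorm A x = 1 ∧ anorm A (T x) = opAnorm A T := by
    have hx' : x ∈ {z : H | ∃ γ : ℂ, ‖γ‖ = 1 ∧ z = γ • x} := ⟨1, by simp, (one_smul ℂ x).symm⟩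
    rw [← hM] at hx'
    exact hx'
  obtain ⟨hx1, hxT⟩ := hxM
  set w₀ := ainner A (T x) (S x) with hw₀def
  constructor
  · intro hOrth
    refine ⟨hxT, (theta_iff _ _).mpr ?_⟩
    have hTn : 0 ≤ opAnorm A T := opAnorm_nonneg hT hx1
    have hSn : 0 ≤ opAnorm A S := opAnorm_nonneg hS hx1
    have hC0 : 0 ≤ ε * opAnorm A T * opAnorm A S := mul_nonneg (mul_nonneg hε0 hTn) hSn
    rcases eq_or_lt_of_le hTn with hT0 | hTpos
    · -- degenerate case ‖T‖_A = 0
      have h1 : anorm A (T x) = 0 := by rw [hxT, ← hT0]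
      have h2 := ainner_le hB hBA (T x) (S x)
      rw [h1, zero_mul] at h2
      have : ‖w₀‖ ≤ 0 := by exact h2
      linarith
    rcases eq_or_ne w₀ 0 with hw0 | hw0ne
    · rw [hw0]; simpa using hC0
    have habs0 : (0:ℝ) < ‖w₀‖ := norm_pos_iff.mpr hw0ne
    set μ : ℂ := (starRingEnd ℂ) w₀ / (‖w₀‖ : ℂ) with hμdef
    have hμnorm : ‖μ‖ = 1 := by
      rw [hμdef, norm_div, RCLike.norm_conj, Complex.norm_real, Real.norm_eq_abs,
        abs_of_pos habs0, div_self habs0.ne']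
    have hμw : μ * w₀ = (‖w₀‖ : ℂ) := by
      have hne : ((‖w₀‖ : ℝ) : ℂ) ≠ 0 := by exact_mod_cast habs0.ne'
      rw [hμdef, div_mul_eq_mul_div, mul_comm, Complex.mul_conj, Complex.normSq_eq_norm_sq,
        div_eq_iff hne]
      push_cast
      ring
    set t : ℕ → ℝ := fun n => 1 / (n + 1) with htdef
    have ht0 : ∀ n, 0 < t n := fun n => by
      show (0:ℝ) < 1 / (n + 1); positivity
    have ht1 : ∀ n, t n ≤ 1 := fun n => by
      show (1:ℝ) / (n + 1) ≤ 1
      rw [div_le_one (by positivity)]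
      linarith [(n.cast_nonneg : (0:ℝ) ≤ n)]
    have htlim : Filter.Tendsto t Filter.atTop (𝓝 0) := tendsto_one_div_add_atTop_nhds_zero_nat
    set lam : ℕ → ℂ := fun n => -(t n : ℂ) * μ with hlamdef
    have hlamnorm : ∀ n, ‖lam n‖ = t n := fun n => by
      show ‖-(t n : ℂ) * μ‖ = t n
      rw [norm_mul, hμnorm, mul_one, norm_neg, Complex.norm_real, Real.norm_eq_abs,
        abs_of_pos (ht0 n)]
    set R : ℕ → H →L[ℂ] H := fun n => T + lam n • S with hRdef
    have hRb : ∀ n, IsABounded A (R n) := fun n => isABounded_add_smul hB hBA hT hS _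
    choose z hzK hz1 hzmax using fun n =>
      exists_near_max hB hBA hA (hRb n) hx1 (pow_pos (ht0 n) 2)
    obtain ⟨M, hMbd⟩ := isBounded_iff_forall_norm_le.mp hball
    have hzM : ∀ n, ‖z n‖ ≤ M := fun n => hMbd _ ⟨le_of_eq (hz1 n), hzK n⟩
    obtain ⟨u, φ, hφ, hTu⟩ := compact_subseq hTc z hzM
    obtain ⟨v, ψ, hψ, hSv⟩ := compact_subseq hSc (fun n => z (φ n)) (fun n => hzM _)
    set χ : ℕ → ℕ := fun n => φ (ψ n) with hχdef
    set y : ℕ → H := fun n => z (χ n) with hydef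
    have hTy : Filter.Tendsto (fun n => T (y n)) Filter.atTop (𝓝 u) :=
      hTu.comp hψ.tendsto_atTop
    have hSy : Filter.Tendsto (fun n => S (y n)) Filter.atTop (𝓝 v) := hSv
    have hχt : Filter.Tendsto (fun n => t (χ n)) Filter.atTop (𝓝 0) :=
      htlim.comp ((hφ.comp hψ).tendsto_atTop)
    have hy1 : ∀ n, anorm A (y n) = 1 := fun n => hz1 _
    have hyM : ∀ n, ‖y n‖ ≤ M := fun n => hzM _
    have hanc : Continuous (anorm A) := by
      have hfun : anorm A = fun y => ‖B y‖ := funext (anorm_eq hB hBA)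
      rw [hfun]
      exact B.continuous.norm
    -- upper bound on ‖R n‖_A and lower bound on ‖T z_n‖_A
    have hRub : ∀ n, opAnorm A (R n) ≤ opAnorm A T + t n * opAnorm A S := by
      intro n
      apply opAnorm_le hx1
      intro z' hz'
      have h1 : anorm A (R n z') ≤ anorm A (T z') + anorm A ((lam n • S) z') := by
        have hsplit : R n z' = T z' + (lam n • S) z' := by simp [hRdef]
        rw [hsplit]
        exact anorm_add_le hB hBA _ _
      have h2 : anorm A ((lam n • S) z') = t n * anorm A (S z') := by
        rw [ContinuousLinearMap.smul_apply, anorm_smul hB hBA, hlamnorm]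
      have h3 := le_opAnorm hT hz'
      have h4 := le_opAnorm hS hz'
      have h5 := (ht0 n).le
      nlinarith [h1, h2, h3, h4]
    have hTlb : ∀ n, opAnorm A T - (2 * t n * opAnorm A S + t n ^ 2) ≤ anorm A (T (z n)) := by
      intro n
      have hO : opAnorm A T ≤ opAnorm A (R n) + t n * opAnorm A S := by
        apply opAnorm_le hx1
        intro z' hz'
        have hsplit : T z' = R n z' + ((-lam n) • S) z' := by
          simp [hRdef, add_assoc, ← add_smul]
        have h1 : anorm A (T z') ≤ anorm A (R n z') + anorm A (((-lam n) • S) z') := by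
          rw [hsplit]; exact anorm_add_le hB hBA _ _
        have h2 : anorm A (((-lam n) • S) z') = t n * anorm A (S z') := by
          rw [ContinuousLinearMap.smul_apply, anorm_smul hB hBA, norm_neg, hlamnorm]
        have h3 := le_opAnorm (hRb n) hz'
        have h4 := le_opAnorm hS hz'
        nlinarith [ht0 n]
      have h2' : anorm A (R n (z n)) ≤ anorm A (T (z n)) + t n * anorm A (S (z n)) := by
        have hsplit : R n (z n) = T (z n) + (lam n • S) (z n) := by simp [hRdef]
        have := anorm_add_le hB hBA (T (z n)) ((lam n • S) (z n))
        rw [← hsplit] at this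
        have h2 : anorm A ((lam n • S) (z n)) = t n * anorm A (S (z n)) := by
          rw [ContinuousLinearMap.smul_apply, anorm_smul hB hBA, hlamnorm]
        linarith [this, h2.le, h2.ge]
      have h4 := le_opAnorm hS (hz1 n)
      nlinarith [hzmax n, ht0 n]
    -- anorm A u = ‖T‖_A
    have hconvT : Filter.Tendsto (fun n => anorm A (T (y n))) Filter.atTop (𝓝 (anorm A u)) :=
      (hanc.tendsto u).comp hTy
    have hanu : anorm A u = opAnorm A T := by
      have hub : anorm A u ≤ opAnorm A T :=
        le_of_tendsto hconvT (Filter.Eventually.of_forall fun n => le_opAnorm hT (hy1 n))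
      have hlbseq : Filter.Tendsto
          (fun n => opAnorm A T - (2 * t (χ n) * opAnorm A S + t (χ n) ^ 2))
          Filter.atTop (𝓝 (opAnorm A T - (2 * 0 * opAnorm A S + 0 ^ 2))) := by
        exact tendsto_const_nhds.sub (((hχt.const_mul 2).mul_const _).add (hχt.pow 2))
      simp only [mul_zero, zero_mul, ne_eq, OfNat.ofNat_ne_zero, not_false_eq_true, zero_pow,
        add_zero, sub_zero] at hlbseq
      have hlb : opAnorm A T ≤ anorm A u :=
        le_of_tendsto_of_tendsto' hlbseq hconvT (fun n => hTlb (χ n))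
      linarith
    -- weak cluster point
    obtain ⟨w, hw⟩ := exists_weak_cluster y hyM
    have hTw : T w = u := by
      apply ext_inner_right ℂ
      intro y'
      have hcl := hw ((ContinuousLinearMap.adjoint T) y')
      have heq : (fun n => (inner ℂ (y n) ((ContinuousLinearMap.adjoint T) y') : ℂ))
          = fun n => (inner ℂ (T (y n)) y' : ℂ) :=
        funext fun n => ContinuousLinearMap.adjoint_inner_right T _ _
      rw [heq] at hcl
      have hterm : Filter.Tendsto (fun n => (inner ℂ (T (y n)) y' : ℂ)) Filter.atTop
          (𝓝 (inner ℂ u y')) := hTy.inner tendsto_const_nhds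
      have hfin := cluster_eq hcl hterm
      rw [ContinuousLinearMap.adjoint_inner_right] at hfin
      exact hfin
    have hSw : S w = v := by
      apply ext_inner_right ℂ
      intro y'
      have hcl := hw ((ContinuousLinearMap.adjoint S) y')
      have heq : (fun n => (inner ℂ (y n) ((ContinuousLinearMap.adjoint S) y') : ℂ))
          = fun n => (inner ℂ (S (y n)) y' : ℂ) :=
        funext fun n => ContinuousLinearMap.adjoint_inner_right S _ _
      rw [heq] at hcl
      have hterm : Filter.Tendsto (fun n => (inner ℂ (S (y n)) y' : ℂ)) Filter.atTop
          (𝓝 (inner ℂ v y')) := hSy.inner tendsto_const_nhds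
      have hfin := cluster_eq hcl hterm
      rw [ContinuousLinearMap.adjoint_inner_right] at hfin
      exact hfin
    have hwA : anorm A w ≤ 1 := by
      have hcl := hw (A w)
      have hball' : ∀ n, (inner ℂ (y n) (A w) : ℂ) ∈ Metric.closedBall (0:ℂ) (anorm A w) := by
        intro n
        rw [Metric.mem_closedBall, dist_zero_right]
        have h1 : ‖(inner ℂ (y n) (A w) : ℂ)‖ = ‖(inner ℂ (A w) (y n) : ℂ)‖ := norm_inner_symm _ _
        have h2 := ainner_le hB hBA w (y n)
        rw [hy1 n, mul_one] at h2
        rw [h1]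
        exact h2
      have hmem := cluster_mem hcl Metric.isClosed_closedBall hball'
      rw [Metric.mem_closedBall, dist_zero_right] at hmem
      have hpos : 0 ≤ RCLike.re (inner ℂ (A w) w : ℂ) := hA.re_inner_nonneg_left w
      have hsq : anorm A w ^ 2 = RCLike.re (inner ℂ (A w) w : ℂ) := Real.sq_sqrt hpos
      have hre : RCLike.re (inner ℂ (A w) w : ℂ) ≤ ‖(inner ℂ (A w) w : ℂ)‖ := RCLike.re_le_norm _
      have hsymm : ‖(inner ℂ (A w) w : ℂ)‖ = ‖(inner ℂ w (A w) : ℂ)‖ := norm_inner_symm _ _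
      nlinarith [anorm_nonneg (A := A) w]
    have hw1 : anorm A w = 1 := by
      have h1 : anorm A (T w) = opAnorm A T := by rw [hTw, hanu]
      have h2 : anorm A (T w) ≤ opAnorm A T * anorm A w := anorm_apply_le hB hBA hT hx1 w
      rw [h1] at h2
      have : 1 ≤ anorm A w := by nlinarith
      linarith
    have hMw : w ∈ {z : H | ∃ γ : ℂ, ‖γ‖ = 1 ∧ z = γ • x} := by
      rw [← hM]
      exact ⟨hw1, by rw [hTw, hanu]⟩
    obtain ⟨γ, hγ, hwx⟩ := hMw
    have hγγ : (starRingEnd ℂ) γ * γ = 1 := by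
      rw [mul_comm, Complex.mul_conj, Complex.normSq_eq_norm_sq, hγ]
      norm_num
    have hTu' : u = γ • T x := by rw [← hTw, hwx, map_smul]
    have hSv' : v = γ • S x := by rw [← hSw, hwx, map_smul]
    have hAuv : (inner ℂ (A u) v : ℂ) = w₀ := by
      rw [hTu', hSv', map_smul, inner_smul_left, inner_smul_right, ← mul_assoc, hγγ, one_mul]
      rfl
    have hq : Filter.Tendsto (fun n => (inner ℂ (A (T (y n))) (S (y n)) : ℂ)) Filter.atTop
        (𝓝 w₀) := by
      have h1 : Filter.Tendsto (fun n => A (T (y n))) Filter.atTop (𝓝 (A u)) :=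
        (A.continuous.tendsto u).comp hTy
      have h2 : Filter.Tendsto (fun n => (inner ℂ (A (T (y n))) (S (y n)) : ℂ)) Filter.atTop
          (𝓝 (inner ℂ (A u) v : ℂ)) := h1.inner hSy
      rwa [hAuv] at h2
    have hqre : Filter.Tendsto (fun n => (μ * (inner ℂ (A (T (y n))) (S (y n)) : ℂ)).re)
        Filter.atTop (𝓝 (‖w₀‖)) := by
      have h1 : Filter.Tendsto (fun n => μ * (inner ℂ (A (T (y n))) (S (y n)) : ℂ))
          Filter.atTop (𝓝 (μ * w₀)) := tendsto_const_nhds.mul hq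
      have h2 := (Complex.continuous_re.tendsto _).comp h1
      rw [hμw] at h2
      rw [Complex.ofReal_re] at h2
      exact h2
    -- the per-index inequality
    have hkey : ∀ n, (μ * (inner ℂ (A (T (y n))) (S (y n)) : ℂ)).re
        ≤ ε * opAnorm A T * opAnorm A S + t (χ n) *
          ((opAnorm A S ^ 2 + 2 * (opAnorm A T + opAnorm A S) + 1) / 2) := by
      intro n
      have hOr := hOrth (lam (χ n))
      have hsm : opAnorm A (lam (χ n) • S) = t (χ n) * opAnorm A S := by
        rw [opAnorm_smul hB hBA hS hx1, hlamnorm]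
      have hR0 : 0 ≤ opAnorm A (R (χ n)) := opAnorm_nonneg (hRb (χ n)) hx1
      have hzle : opAnorm A (R (χ n)) ≤ anorm A (R (χ n) (z (χ n))) + t (χ n) ^ 2 := by
        linarith [hzmax (χ n)]
      have hsq1 : opAnorm A (R (χ n)) ^ 2 ≤ (anorm A (R (χ n) (z (χ n))) + t (χ n) ^ 2) ^ 2 :=
        pow_le_pow_left₀ hR0 hzle 2
      have hexpand : anorm A (R (χ n) (z (χ n))) ^ 2
          = anorm A (T (z (χ n))) ^ 2
            + 2 * (-(t (χ n)) * (μ * (inner ℂ (A (T (z (χ n)))) (S (z (χ n))) : ℂ)).re)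
            + t (χ n) ^ 2 * anorm A (S (z (χ n))) ^ 2 := by
        have hsplit : R (χ n) (z (χ n)) = T (z (χ n)) + lam (χ n) • (S (z (χ n))) := by
          simp [hRdef]
        rw [hsplit, anorm_expand hB hBA, hlamnorm]
        congr 2
        have hmul : lam (χ n) * ainner A (T (z (χ n))) (S (z (χ n)))
            = ((-(t (χ n)) : ℝ) : ℂ) * (μ * (inner ℂ (A (T (z (χ n)))) (S (z (χ n))) : ℂ)) := by
          rw [hlamdef]
          show -(t (χ n) : ℂ) * μ * _ = _
          rw [show ainner A (T (z (χ n))) (S (z (χ n)))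
            = (inner ℂ (A (T (z (χ n)))) (S (z (χ n))) : ℂ) from rfl]
          push_cast
          ring
        rw [hmul, Complex.re_ofReal_mul]
      have haT := le_opAnorm hT (hz1 (χ n))
      have haT0 : 0 ≤ anorm A (T (z (χ n))) := anorm_nonneg _
      have haS := le_opAnorm hS (hz1 (χ n))
      have haS0 : 0 ≤ anorm A (S (z (χ n))) := anorm_nonneg _
      have haR : anorm A (R (χ n) (z (χ n))) ≤ opAnorm A T + opAnorm A S := by
        have h1 := le_opAnorm (hRb (χ n)) (hz1 (χ n))
        have h2 := hRub (χ n)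
        nlinarith [ht0 (χ n), ht1 (χ n)]
      have haR0 : 0 ≤ anorm A (R (χ n) (z (χ n))) := anorm_nonneg _
      have htn0 := ht0 (χ n)
      have htn1 := ht1 (χ n)
      have haT2 : anorm A (T (z (χ n))) ^ 2 ≤ opAnorm A T ^ 2 := pow_le_pow_left₀ haT0 haT 2
      have haS2 : anorm A (S (z (χ n))) ^ 2 ≤ opAnorm A S ^ 2 := pow_le_pow_left₀ haS0 haS 2
      have ht2 : t (χ n) ^ 2 ≤ 1 := by nlinarith
      have htn4 : t (χ n) ^ 4 ≤ t (χ n) ^ 2 := by nlinarith [sq_nonneg (t (χ n)), ht2]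
      have hcross : 2 * anorm A (R (χ n) (z (χ n))) * t (χ n) ^ 2
          ≤ 2 * (opAnorm A T + opAnorm A S) * t (χ n) ^ 2 := by nlinarith
      have hsq1' : opAnorm A (R (χ n)) ^ 2 ≤ anorm A (R (χ n) (z (χ n))) ^ 2
          + 2 * anorm A (R (χ n) (z (χ n))) * t (χ n) ^ 2 + t (χ n) ^ 4 :=
        le_trans hsq1 (le_of_eq (by ring))
      rw [hsm] at hOr
      have hmain : 2 * t (χ n) * (μ * (inner ℂ (A (T (z (χ n)))) (S (z (χ n))) : ℂ)).re
          ≤ 2 * t (χ n) * (ε * opAnorm A T * opAnorm A S)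
            + t (χ n) ^ 2 * (opAnorm A S ^ 2 + 2 * (opAnorm A T + opAnorm A S) + 1) := by
        nlinarith [hOr, hsq1', hexpand, haT2, haS2, htn4, hcross]
      have h2tn : (0:ℝ) < 2 * t (χ n) := by linarith
      have hdiv := (div_le_div_iff_of_pos_right h2tn).mpr hmain
      calc (μ * (inner ℂ (A (T (y n))) (S (y n)) : ℂ)).re
          = (2 * t (χ n) * (μ * (inner ℂ (A (T (z (χ n)))) (S (z (χ n))) : ℂ)).re)
            / (2 * t (χ n)) := by
            rw [eq_div_iff h2tn.ne']
            ring
        _ ≤ (2 * t (χ n) * (ε * opAnorm A T * opAnorm A S)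
            + t (χ n) ^ 2 * (opAnorm A S ^ 2 + 2 * (opAnorm A T + opAnorm A S) + 1))
            / (2 * t (χ n)) := hdiv
        _ = ε * opAnorm A T * opAnorm A S + t (χ n) *
            ((opAnorm A S ^ 2 + 2 * (opAnorm A T + opAnorm A S) + 1) / 2) := by
            field_simp
    have hrhs : Filter.Tendsto (fun n => ε * opAnorm A T * opAnorm A S + t (χ n) *
        ((opAnorm A S ^ 2 + 2 * (opAnorm A T + opAnorm A S) + 1) / 2)) Filter.atTop
        (𝓝 (ε * opAnorm A T * opAnorm A S)) := by
      have h1 : Filter.Tendsto (fun n : ℕ => t (χ n) *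
          ((opAnorm A S ^ 2 + 2 * (opAnorm A T + opAnorm A S) + 1) / 2)) Filter.atTop
          (𝓝 (0 * ((opAnorm A S ^ 2 + 2 * (opAnorm A T + opAnorm A S) + 1) / 2))) :=
        hχt.mul_const _
      rw [zero_mul] at h1
      have h2 := h1.const_add (ε * opAnorm A T * opAnorm A S)
      simpa using h2
    exact le_of_tendsto_of_tendsto' hqre hrhs hkey
  · rintro ⟨-, hθ⟩
    have habs : ‖w₀‖ ≤ ε * opAnorm A T * opAnorm A S := (theta_iff _ _).mp hθ
    intro l
    have happ : (T + l • S) x = T x + l • S x := by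
      simp [ContinuousLinearMap.add_apply, ContinuousLinearMap.smul_apply]
    have hexp := anorm_expand hB hBA (T x) (S x) l
    have hle : anorm A ((T + l • S) x) ≤ opAnorm A (T + l • S) :=
      le_opAnorm (isABounded_add_smul hB hBA hT hS l) hx1
    have hsq : anorm A ((T + l • S) x) ^ 2 ≤ opAnorm A (T + l • S) ^ 2 :=
      pow_le_pow_left₀ (anorm_nonneg _) hle 2
    have hre : -(‖l‖ * ‖w₀‖) ≤ (l * w₀).re := by
      have h1 : -‖l * w₀‖ ≤ (l * w₀).re :=
        neg_le_of_abs_le (Complex.abs_re_le_norm _)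
      rwa [norm_mul] at h1
    have hsm : opAnorm A (l • S) = ‖l‖ * opAnorm A S := opAnorm_smul hB hBA hS hx1 l
    have habs' : ‖l‖ * ‖w₀‖ ≤ ‖l‖ * (ε * opAnorm A T * opAnorm A S) :=
      mul_le_mul_of_nonneg_left habs (norm_nonneg l)
    have h0 : 0 ≤ ‖l‖ ^ 2 * anorm A (S x) ^ 2 := by positivity
    rw [happ] at hsq
    rw [hexp, hxT] at hsq
    rw [hsm]
    nlinarith [hsq, hre, habs', h0]
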